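/- Let Z ∼ Bernoulli(p)^⊗n with p ∈ (0,1/2), let K ⊆ F₂ⁿ, and let Q_K(r) = |K ∩ B_{n,r}|/|K| be the CDF of the Hamming weight of a uniform point of K, where B_{n,r} is the Hamming ball of radius r. Then Pr(Z ∈ K) = |K| · ( (p/(1-p)) pⁿ + ((1-2p)/(1-p)) · E[ Q_K(|Z|) / C(n,|Z|) ] ), where |Z| ∼ Binomial(n,p). -/

import Mathlib

open Finset

/-- For `Z ∼ Bernoulli(p)^⊗n` and a nonempty `K ⊆ F₂ⁿ`, with
`Q_K(r) = |K ∩ B_{n,r}|/|K|` the CDF of the Hamming weight of a uniform point of `K`,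
`Pr(Z ∈ K) = |K| ((p/(1-p)) pⁿ + ((1-2p)/(1-p)) E[Q_K(|Z|)/C(n,|Z|)])`. -/
theorem bernoulli_prob_as_cdf_expectation (n : ℕ) (p : ℝ) (hp : 0 < p) (hp' : p < 1 / 2)
    (K : Finset (Fin n → ZMod 2)) (hK : K.Nonempty)
    (Q : ℕ → ℝ)
    (hQ : ∀ r, Q r = ((K.filter fun x => hammingNorm x ≤ r).card : ℝ) / K.card) :
    ∑ x ∈ K, p ^ hammingNorm x * (1 - p) ^ (n - hammingNorm x) =
      (K.card : ℝ) *
        ((p / (1 - p)) * p ^ n +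
          ((1 - 2 * p) / (1 - p)) *
            ∑ r ∈ Finset.range (n + 1),
              (n.choose r : ℝ) * p ^ r * (1 - p) ^ (n - r) * (Q r / (n.choose r : ℝ))) := by
  have hp1 : (1 : ℝ) - p ≠ 0 := by rw [sub_ne_zero]; intro h; linarith
  have hKc : (K.card : ℝ) ≠ 0 := by
    exact_mod_cast Finset.card_ne_zero_of_mem hK.choose_spec
  set f : ℕ → ℝ := fun r => p ^ r * (1 - p) ^ (n - r) with hf
  set S : ℕ → ℝ := fun r => ((K.filter fun x => hammingNorm x ≤ r).card : ℝ) with hSdef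
  set a : ℕ → ℝ := fun r => ((K.filter fun x => hammingNorm x = r).card : ℝ) with hadef
  have hnorm : ∀ x : Fin n → ZMod 2, hammingNorm x ≤ n := fun x => by
    simpa [hammingNorm] using Finset.card_filter_le Finset.univ (fun i => x i ≠ 0)
  have hSa : ∀ r, S (r + 1) = S r + a (r + 1) := by
    intro r
    rw [hSdef, hadef]
    push_cast
    norm_cast
    simp only [Finset.card_filter]
    rw [← Finset.sum_add_distrib]
    exact Finset.sum_congr rfl fun x _ => by split_ifs <;> omega
  have ha0 : a 0 = S 0 := by
    rw [hSdef, hadef]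
    simp [Nat.le_zero]
  have h1 : ∑ x ∈ K, p ^ hammingNorm x * (1 - p) ^ (n - hammingNorm x)
      = ∑ r ∈ Finset.range (n + 1), a r * f r := by
    rw [← Finset.sum_fiberwise_of_maps_to
      (fun x _ => Finset.mem_range.mpr (Nat.lt_succ_of_le (hnorm x)))
      (fun x => p ^ hammingNorm x * (1 - p) ^ (n - hammingNorm x))]
    refine Finset.sum_congr rfl fun r hr => ?_
    rw [Finset.sum_congr rfl (fun x hx => by
      rw [(Finset.mem_filter.mp hx).2] : ∀ x ∈ K.filter fun x => hammingNorm x = r, _ = f r)]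
    rw [Finset.sum_const, nsmul_eq_mul]
  have h2 : ∑ r ∈ Finset.range (n + 1), a r * f r
      = (∑ r ∈ Finset.range (n + 1), S r * f r) - ∑ r ∈ Finset.range n, S r * f (r + 1) := by
    rw [Finset.sum_range_succ' (fun r => a r * f r) n,
        Finset.sum_range_succ' (fun r => S r * f r) n, ha0]
    rw [Finset.sum_congr rfl (fun r _ => by rw [hSa r]; ring :
      ∀ r ∈ Finset.range n, a (r + 1) * f (r + 1) = S (r + 1) * f (r + 1) - S r * f (r + 1)),
      Finset.sum_sub_distrib]
    ring
  have h3 : ∑ r ∈ Finset.range (n + 1),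
      (n.choose r : ℝ) * p ^ r * (1 - p) ^ (n - r) * (Q r / (n.choose r : ℝ))
      = (∑ r ∈ Finset.range (n + 1), S r * f r) / K.card := by
    rw [Finset.sum_div]
    refine Finset.sum_congr rfl fun r hr => ?_
    have hc : (n.choose r : ℝ) ≠ 0 := by
      exact_mod_cast (Nat.choose_pos (Nat.lt_succ_iff.mp (Finset.mem_range.mp hr))).ne'
    rw [hQ r, hf]
    field_simp
    ring
  have hSn : S n = K.card := by
    have h : K.filter (fun x => hammingNorm x ≤ n) = K :=
      Finset.filter_true_of_mem fun x _ => hnorm x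
    rw [hSdef]
    simp [h]
  have hU : ∑ r ∈ Finset.range (n + 1), S r * f r
      = (∑ r ∈ Finset.range n, S r * f r) + (K.card : ℝ) * p ^ n := by
    rw [Finset.sum_range_succ, hSn, hf]
    simp
  have hV : (1 - p) * ∑ r ∈ Finset.range n, S r * f (r + 1)
      = p * ∑ r ∈ Finset.range n, S r * f r := by
    rw [Finset.mul_sum, Finset.mul_sum]
    refine Finset.sum_congr rfl fun r hr => ?_
    have hr' : r < n := Finset.mem_range.mp hr
    have hnr : n - r = (n - (r + 1)) + 1 := by omega
    rw [hf]
    simp only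
    rw [hnr, pow_succ, pow_succ]
    ring
  rw [h1, h2, h3, hU]
  field_simp
  linear_combination -hV
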